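/- arXiv:2408.02241 — 4 statements merged into one kernel-verified Lean document; each statement's English description precedes it below -/
import Mathlib

section
/- Let ε > 0, L ∈ ℕ, and let V_0, ..., V_L and C_0, ..., C_L be strictly positive real numbers. For every choice of strictly positive reals m_0, ..., m_L satisfying the sampling-error constraint Σ_{ℓ=0}^{L} V_ℓ / m_ℓ ≤ ε²/2, the total cost satisfies Σ_{ℓ=0}^{L} m_ℓ C_ℓ ≥ 2 ε^{-2} (Σ_{ℓ=0}^{L} √(C_ℓ V_ℓ))². Consequently the allocation n_ℓ = 2 ε^{-2} √(V_ℓ / C_ℓ) · Σ_{k=0}^{L} √(C_k V_k) minimizes the total cost among all allocations meeting the constraint. -/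
open Real Finset

lemma mlmc_aux (v c : ℝ) (hv : 0 < v) (hc : 0 < c) :
    Real.sqrt (v / c) * c = Real.sqrt (c * v) ∧
    v / Real.sqrt (v / c) = Real.sqrt (c * v) := by
  have h1 : Real.sqrt (v / c) = Real.sqrt v / Real.sqrt c := Real.sqrt_div hv.le c
  have h2 : Real.sqrt (c * v) = Real.sqrt c * Real.sqrt v := Real.sqrt_mul hc.le v
  have hv' : (0:ℝ) < Real.sqrt v := Real.sqrt_pos.2 hv
  have hc' : (0:ℝ) < Real.sqrt c := Real.sqrt_pos.2 hc
  have hvv := Real.mul_self_sqrt hv.le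
  have hcc := Real.mul_self_sqrt hc.le
  constructor
  · rw [h1, h2]; field_simp; nlinarith
  · rw [h1, h2]; field_simp; nlinarith

/-- Optimality of the standard MLMC sample allocation: every positive allocation
meeting the sampling-error constraint `∑_ℓ V_ℓ / m_ℓ ≤ ε²/2` has total cost at
least `2 ε⁻² (∑_ℓ √(C_ℓ V_ℓ))²`, and the allocation
`n_ℓ = 2 ε⁻² √(V_ℓ/C_ℓ) ∑_k √(C_k V_k)` meets the constraint and attains this
cost, hence minimizes the total cost. -/
theorem mlmc_allocation_optimal (ε : ℝ) (hε : 0 < ε) (L : ℕ)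
    (V C : Fin (L + 1) → ℝ) (hV : ∀ ℓ, 0 < V ℓ) (hC : ∀ ℓ, 0 < C ℓ)
    (n : Fin (L + 1) → ℝ)
    (hn : ∀ ℓ, n ℓ = 2 * (ε ^ 2)⁻¹ * Real.sqrt (V ℓ / C ℓ) * ∑ k, Real.sqrt (C k * V k)) :
    (∀ m : Fin (L + 1) → ℝ, (∀ ℓ, 0 < m ℓ) → (∑ ℓ, V ℓ / m ℓ) ≤ ε ^ 2 / 2 →
        2 * (ε ^ 2)⁻¹ * (∑ ℓ, Real.sqrt (C ℓ * V ℓ)) ^ 2 ≤ ∑ ℓ, m ℓ * C ℓ) ∧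
      (∀ ℓ, 0 < n ℓ) ∧
      (∑ ℓ, V ℓ / n ℓ) ≤ ε ^ 2 / 2 ∧
      (∑ ℓ, n ℓ * C ℓ) = 2 * (ε ^ 2)⁻¹ * (∑ ℓ, Real.sqrt (C ℓ * V ℓ)) ^ 2 := by
  have hε2 : (0:ℝ) < ε ^ 2 := by positivity
  set S := ∑ k, Real.sqrt (C k * V k) with hSdef
  have hS : 0 < S :=
    Finset.sum_pos (fun k _ => Real.sqrt_pos.2 (mul_pos (hC k) (hV k))) ⟨0, Finset.mem_univ 0⟩
  refine ⟨?_, ?_, ?_, ?_⟩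
  · -- lower bound via Cauchy-Schwarz
    intro m hm hcon
    have cs := Finset.sum_mul_sq_le_sq_mul_sq Finset.univ
      (fun ℓ => Real.sqrt (V ℓ / m ℓ)) (fun ℓ => Real.sqrt (m ℓ * C ℓ))
    have e1 : ∀ ℓ : Fin (L+1),
        Real.sqrt (V ℓ / m ℓ) * Real.sqrt (m ℓ * C ℓ) = Real.sqrt (C ℓ * V ℓ) := by
      intro ℓ
      rw [← Real.sqrt_mul (div_pos (hV ℓ) (hm ℓ)).le]
      congr 1
      field_simp [(hm ℓ).ne']
    have e2 : ∀ ℓ : Fin (L+1), Real.sqrt (V ℓ / m ℓ) ^ 2 = V ℓ / m ℓ := fun ℓ =>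
      Real.sq_sqrt (div_pos (hV ℓ) (hm ℓ)).le
    have e3 : ∀ ℓ : Fin (L+1), Real.sqrt (m ℓ * C ℓ) ^ 2 = m ℓ * C ℓ := fun ℓ =>
      Real.sq_sqrt (mul_pos (hm ℓ) (hC ℓ)).le
    simp only [e1, e2, e3] at cs
    have hmc : (0:ℝ) ≤ ∑ ℓ, m ℓ * C ℓ :=
      Finset.sum_nonneg fun ℓ _ => (mul_pos (hm ℓ) (hC ℓ)).le
    have h4 : S ^ 2 ≤ (ε ^ 2 / 2) * ∑ ℓ, m ℓ * C ℓ :=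
      cs.trans (mul_le_mul_of_nonneg_right hcon hmc)
    rw [show 2 * (ε ^ 2)⁻¹ * S ^ 2 = S ^ 2 / (ε ^ 2 / 2) by field_simp]
    rw [div_le_iff₀ (by positivity)]
    linarith [h4]
  · intro ℓ
    rw [hn ℓ]
    have h := Real.sqrt_pos.2 (div_pos (hV ℓ) (hC ℓ))
    have : (0:ℝ) < 2 * (ε ^ 2)⁻¹ := by positivity
    exact mul_pos (mul_pos this h) hS
  · have e : ∀ ℓ : Fin (L+1), V ℓ / n ℓ = ε ^ 2 / (2 * S) * Real.sqrt (C ℓ * V ℓ) := by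
      intro ℓ
      have h2 := (mlmc_aux (V ℓ) (C ℓ) (hV ℓ) (hC ℓ)).2
      have hsq : (0:ℝ) < Real.sqrt (V ℓ / C ℓ) := Real.sqrt_pos.2 (div_pos (hV ℓ) (hC ℓ))
      rw [hn ℓ, ← h2]
      field_simp
    rw [Finset.sum_congr rfl (fun ℓ _ => e ℓ), ← Finset.mul_sum, ← hSdef]
    rw [show ε ^ 2 / (2 * S) * S = ε ^ 2 / 2 by field_simp]
  · have e : ∀ ℓ : Fin (L+1), n ℓ * C ℓ = 2 * (ε ^ 2)⁻¹ * S * Real.sqrt (C ℓ * V ℓ) := by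
      intro ℓ
      have h1 := (mlmc_aux (V ℓ) (C ℓ) (hV ℓ) (hC ℓ)).1
      rw [hn ℓ]
      linear_combination (2 * (ε ^ 2)⁻¹ * S) * h1
    rw [Finset.sum_congr rfl (fun ℓ _ => e ℓ), ← Finset.mul_sum, ← hSdef]
    ring
end

section
/- (MLMC complexity, case β > γ.) Let α, β, γ, c₁, c₂, c₃ > 0 with β > γ and α ≥ γ/2 (i.e., α ≥ ½ min(β, γ)), and let s ≥ 2 be an integer. Then there exist constants ε₀ > 0 and c₄ > 0 such that for every ε ∈ (0, ε₀) there exist L ∈ ℕ and positive integers N_0, ..., N_L satisfying both the mean-square-error bound c₁² s^{-2αL} + Σ_{ℓ=0}^{L} c₂ s^{-β(L−ℓ)} / N_ℓ ≤ ε² and the total cost bound Σ_{ℓ=0}^{L} N_ℓ · c₃ s^{γ(L−ℓ)} ≤ c₄ ε^{-2}. -/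
set_option maxHeartbeats 1000000
open Real Finset

lemma mlmc_geom_sum_le_of_lt_one {r : ℝ} (h0 : 0 ≤ r) (h1 : r < 1) (n : ℕ) :
    ∑ i ∈ Finset.range n, r ^ i ≤ 1 / (1 - r) := by
  have h1' : r ≠ 1 := ne_of_lt h1
  rw [geom_sum_eq h1']
  have h2 : (r ^ n - 1) / (r - 1) = (1 - r ^ n) / (1 - r) := by
    rw [← neg_div_neg_eq]; ring_nf
  rw [h2]
  gcongr
  · have := pow_nonneg h0 n; linarith

lemma mlmc_geom_sum_le_of_one_lt {q : ℝ} (h1 : 1 < q) (n : ℕ) :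
    ∑ i ∈ Finset.range n, q ^ i ≤ q ^ n / (q - 1) := by
  have h1' : q ≠ 1 := ne_of_gt h1
  rw [geom_sum_eq h1']
  gcongr
  · linarith

/-- MLMC complexity theorem, arithmetic core, case `β > γ`: for a geometric mesh
hierarchy `M_ℓ = s^(L-ℓ)`, for all sufficiently small `ε` one can choose a number
of levels `L` and positive sample counts `N_ℓ` so that the mean square error
bound `c₁² s^{-2αL} + ∑_ℓ c₂ s^{-β(L-ℓ)}/N_ℓ ≤ ε²` holds with total cost
`∑_ℓ N_ℓ c₃ s^{γ(L-ℓ)} ≤ c₄ ε⁻²`. -/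
theorem mlmc_complexity_beta_gt_gamma
    (α β γ c₁ c₂ c₃ : ℝ)
    (hα : 0 < α) (hβ : 0 < β) (hγ : 0 < γ)
    (hc₁ : 0 < c₁) (hc₂ : 0 < c₂) (hc₃ : 0 < c₃)
    (hβγ : γ < β) (hαγ : γ / 2 ≤ α)
    (s : ℕ) (hs : 2 ≤ s) :
    ∃ ε₀ c₄ : ℝ, 0 < ε₀ ∧ 0 < c₄ ∧
      ∀ ε : ℝ, 0 < ε → ε < ε₀ →
        ∃ (L : ℕ) (N : ℕ → ℕ), (∀ ℓ ≤ L, 0 < N ℓ) ∧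
          c₁ ^ 2 * (s : ℝ) ^ (-(2 * α * (L : ℝ))) +
              (∑ ℓ ∈ Finset.range (L + 1),
                c₂ * (s : ℝ) ^ (-(β * ((L : ℝ) - (ℓ : ℝ)))) / (N ℓ : ℝ)) ≤ ε ^ 2 ∧
          (∑ ℓ ∈ Finset.range (L + 1),
              (N ℓ : ℝ) * (c₃ * (s : ℝ) ^ (γ * ((L : ℝ) - (ℓ : ℝ)))))
            ≤ c₄ * ε ^ (-2 : ℝ) := by
  set t : ℝ := (s : ℝ) with ht_def
  have ht2 : (2:ℝ) ≤ t := by rw [ht_def]; exact_mod_cast hs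
  have ht1 : (1:ℝ) < t := by linarith
  have ht0 : (0:ℝ) < t := by linarith
  have hlogt : 0 < Real.log t := Real.log_pos ht1
  set δ : ℝ := (β + γ) / 2 with hδ_def
  have hδγ : γ < δ := by rw [hδ_def]; linarith
  have hδβ : δ < β := by rw [hδ_def]; linarith
  set r1 : ℝ := t ^ (-(β - δ)) with hr1_def
  set r2 : ℝ := t ^ (-(δ - γ)) with hr2_def
  have hr1_pos : 0 < r1 := Real.rpow_pos_of_pos ht0 _
  have hr1_lt : r1 < 1 := Real.rpow_lt_one_of_one_lt_of_neg ht1 (by linarith)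
  have hr2_pos : 0 < r2 := Real.rpow_pos_of_pos ht0 _
  have hr2_lt : r2 < 1 := Real.rpow_lt_one_of_one_lt_of_neg ht1 (by linarith)
  set K : ℝ := 2 * c₂ / (1 - r1) with hK_def
  have hK_pos : 0 < K := div_pos (by linarith) (by linarith)
  have htγ : 1 < t ^ γ := Real.one_lt_rpow_iff_of_pos ht0 |>.mpr (Or.inl ⟨ht1, hγ⟩)
  set c₄ : ℝ := c₃ * K / (1 - r2) + 2 * c₁ ^ 2 * c₃ * t ^ (2 * α + γ) / (t ^ γ - 1)
    with hc4_def
  have hc4_pos : 0 < c₄ := by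
    apply add_pos
    · exact div_pos (by positivity) (by linarith)
    · apply div_pos ?_ (by linarith)
      have := Real.rpow_pos_of_pos ht0 (2 * α + γ)
      positivity
  refine ⟨min 1 c₁, c₄, lt_min one_pos hc₁, hc4_pos, ?_⟩
  intro ε hε hεlt
  have hε1 : ε < 1 := lt_of_lt_of_le hεlt (min_le_left _ _)
  have hεc1 : ε < c₁ := lt_of_lt_of_le hεlt (min_le_right _ _)
  have hεinv : ε ^ (-2:ℝ) = (ε ^ 2)⁻¹ := by
    rw [Real.rpow_neg hε.le]
    norm_num
  set x : ℝ := Real.log (2 * c₁ ^ 2 / ε ^ 2) / (2 * α * Real.log t) with hx_def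
  have harg : 1 < 2 * c₁ ^ 2 / ε ^ 2 := by
    rw [lt_div_iff₀ (by positivity)]
    nlinarith
  have hx_pos : 0 < x := div_pos (Real.log_pos harg) (by positivity)
  set L : ℕ := ⌈x⌉₊ with hL_def
  have hLx : x ≤ (L:ℝ) := Nat.le_ceil x
  have hLx' : (L:ℝ) ≤ x + 1 := le_of_lt (Nat.ceil_lt_add_one hx_pos.le)
  -- key bound 1: bias
  have hkey1 : 2 * c₁ ^ 2 / ε ^ 2 ≤ t ^ (2 * α * (L:ℝ)) := by
    rw [Real.rpow_def_of_pos ht0,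
      ← Real.exp_log (show (0:ℝ) < 2 * c₁ ^ 2 / ε ^ 2 by positivity)]
    apply Real.exp_le_exp.mpr
    have h := (div_le_iff₀ (show 0 < 2 * α * Real.log t by positivity)).mp hLx
    have h2 : (L:ℝ) * (2 * α * Real.log t) = Real.log t * (2 * α * (L:ℝ)) := by ring
    linarith
  have htL_pos : (0:ℝ) < t ^ (2 * α * (L:ℝ)) := Real.rpow_pos_of_pos ht0 _
  have hbias : c₁ ^ 2 * t ^ (-(2 * α * (L:ℝ))) ≤ ε ^ 2 / 2 := by
    have h1 : (t ^ (2 * α * (L:ℝ)))⁻¹ ≤ (2 * c₁ ^ 2 / ε ^ 2)⁻¹ :=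
      inv_anti₀ (by positivity) hkey1
    rw [Real.rpow_neg ht0.le]
    calc c₁ ^ 2 * (t ^ (2 * α * (L:ℝ)))⁻¹
        ≤ c₁ ^ 2 * (2 * c₁ ^ 2 / ε ^ 2)⁻¹ := by gcongr
      _ = ε ^ 2 / 2 := by field_simp
  -- key bound 2: t^(γL) ≤ t^(2α) * (2c₁²/ε²)
  have hkey2 : t ^ (γ * (L:ℝ)) ≤ t ^ (2 * α) * (2 * c₁ ^ 2 / ε ^ 2) := by
    have hL0 : (0:ℝ) ≤ (L:ℝ) := Nat.cast_nonneg L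
    have h1 : t ^ (γ * (L:ℝ)) ≤ t ^ (2 * α * (L:ℝ)) :=
      Real.rpow_le_rpow_of_exponent_le ht1.le
        (mul_le_mul_of_nonneg_right (by linarith) hL0)
    have h2 : t ^ (2 * α * (L:ℝ)) ≤ t ^ (2 * α * (x + 1)) :=
      Real.rpow_le_rpow_of_exponent_le ht1.le
        (mul_le_mul_of_nonneg_left hLx' (by linarith))
    have h3 : t ^ (2 * α * (x + 1)) = t ^ (2 * α) * (2 * c₁ ^ 2 / ε ^ 2) := by
      have hx2 : Real.log t * (2 * α * x) = Real.log (2 * c₁ ^ 2 / ε ^ 2) := by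
        rw [hx_def]; field_simp
      have h4 : t ^ (2 * α * x) = 2 * c₁ ^ 2 / ε ^ 2 := by
        rw [Real.rpow_def_of_pos ht0, hx2,
          Real.exp_log (show (0:ℝ) < 2 * c₁ ^ 2 / ε ^ 2 by positivity)]
      rw [show 2 * α * (x + 1) = 2 * α * x + 2 * α by ring, Real.rpow_add ht0, h4]
      ring
    linarith
  -- sample counts
  set N : ℕ → ℕ := fun ℓ => ⌈K * ε ^ (-2:ℝ) * t ^ (-(δ * ((L:ℝ) - (ℓ:ℝ))))⌉₊ with hN_def
  have hNval_pos : ∀ ℓ : ℕ, 0 < K * ε ^ (-2:ℝ) * t ^ (-(δ * ((L:ℝ) - (ℓ:ℝ)))) := by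
    intro ℓ
    have h1 : (0:ℝ) < ε ^ (-2:ℝ) := Real.rpow_pos_of_pos hε _
    have h2 : (0:ℝ) < t ^ (-(δ * ((L:ℝ) - (ℓ:ℝ)))) := Real.rpow_pos_of_pos ht0 _
    positivity
  have hNpos : ∀ ℓ : ℕ, 0 < N ℓ := fun ℓ => Nat.ceil_pos.mpr (hNval_pos ℓ)
  refine ⟨L, N, fun ℓ _ => hNpos ℓ, ?_, ?_⟩
  · -- MSE bound
    have hvar : ∑ ℓ ∈ Finset.range (L + 1),
        c₂ * t ^ (-(β * ((L:ℝ) - (ℓ:ℝ)))) / (N ℓ : ℝ) ≤ ε ^ 2 / 2 := by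
      have hstep : ∀ ℓ ∈ Finset.range (L + 1),
          c₂ * t ^ (-(β * ((L:ℝ) - (ℓ:ℝ)))) / (N ℓ : ℝ)
            ≤ c₂ / K * ε ^ 2 * r1 ^ (L - ℓ) := by
        intro ℓ hℓ
        have hℓL : ℓ ≤ L := Nat.lt_succ_iff.mp (Finset.mem_range.mp hℓ)
        have hd : (L:ℝ) - (ℓ:ℝ) = ((L - ℓ : ℕ):ℝ) := by
          rw [Nat.cast_sub hℓL]
        have hN0 : (0:ℝ) < (N ℓ : ℝ) := by exact_mod_cast hNpos ℓ
        have hlb : K * ε ^ (-2:ℝ) * t ^ (-(δ * ((L:ℝ) - (ℓ:ℝ)))) ≤ (N ℓ : ℝ) :=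
          Nat.le_ceil _
        rw [div_le_iff₀ hN0]
        have heq : c₂ * t ^ (-(β * ((L:ℝ) - (ℓ:ℝ))))
            = (c₂ / K * ε ^ 2 * r1 ^ (L - ℓ)) *
              (K * ε ^ (-2:ℝ) * t ^ (-(δ * ((L:ℝ) - (ℓ:ℝ))))) := by
          have hr1m : r1 ^ (L - ℓ) = t ^ (-(β - δ) * ((L:ℝ) - (ℓ:ℝ))) := by
            rw [hr1_def, ← Real.rpow_natCast (t ^ (-(β - δ))) (L - ℓ),
              ← Real.rpow_mul ht0.le, hd]
          have hcomb : t ^ (-(β - δ) * ((L:ℝ) - (ℓ:ℝ))) * t ^ (-(δ * ((L:ℝ) - (ℓ:ℝ))))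
              = t ^ (-(β * ((L:ℝ) - (ℓ:ℝ)))) := by
            rw [← Real.rpow_add ht0]; congr 1; ring
          rw [hr1m, hεinv,
            show c₂ / K * ε ^ 2 * t ^ (-(β - δ) * ((L:ℝ) - (ℓ:ℝ))) *
                (K * (ε ^ 2)⁻¹ * t ^ (-(δ * ((L:ℝ) - (ℓ:ℝ)))))
              = (c₂ / K * K) * (ε ^ 2 * (ε ^ 2)⁻¹) *
                (t ^ (-(β - δ) * ((L:ℝ) - (ℓ:ℝ))) * t ^ (-(δ * ((L:ℝ) - (ℓ:ℝ)))))
              from by ring,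
            hcomb, div_mul_cancel₀ _ (ne_of_gt hK_pos),
            mul_inv_cancel₀ (by positivity : (ε:ℝ) ^ 2 ≠ 0)]
          ring
        rw [heq]
        exact mul_le_mul_of_nonneg_left hlb
          (mul_nonneg (mul_nonneg (by positivity) (by positivity))
            (pow_nonneg hr1_pos.le _))
      calc ∑ ℓ ∈ Finset.range (L + 1), c₂ * t ^ (-(β * ((L:ℝ) - (ℓ:ℝ)))) / (N ℓ : ℝ)
          ≤ ∑ ℓ ∈ Finset.range (L + 1), c₂ / K * ε ^ 2 * r1 ^ (L - ℓ) :=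
            Finset.sum_le_sum hstep
        _ = c₂ / K * ε ^ 2 * ∑ ℓ ∈ Finset.range (L + 1), r1 ^ (L - ℓ) := by
            rw [Finset.mul_sum]
        _ = c₂ / K * ε ^ 2 * ∑ j ∈ Finset.range (L + 1), r1 ^ j := by
            congr 1
            exact Finset.sum_range_reflect (fun j => r1 ^ j) (L + 1)
        _ ≤ c₂ / K * ε ^ 2 * (1 / (1 - r1)) :=
            mul_le_mul_of_nonneg_left
              (mlmc_geom_sum_le_of_lt_one hr1_pos.le hr1_lt (L + 1))
              (by positivity)
        _ = ε ^ 2 / 2 := by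
            rw [hK_def]
            have h1 : (1:ℝ) - r1 ≠ 0 := by linarith
            field_simp
    linarith
  · -- cost bound
    have hstep : ∀ ℓ ∈ Finset.range (L + 1),
        (N ℓ : ℝ) * (c₃ * t ^ (γ * ((L:ℝ) - (ℓ:ℝ))))
          ≤ c₃ * K * ε ^ (-2:ℝ) * r2 ^ (L - ℓ) + c₃ * (t ^ γ) ^ (L - ℓ) := by
      intro ℓ hℓ
      have hℓL : ℓ ≤ L := Nat.lt_succ_iff.mp (Finset.mem_range.mp hℓ)
      have hd : (L:ℝ) - (ℓ:ℝ) = ((L - ℓ : ℕ):ℝ) := by rw [Nat.cast_sub hℓL]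
      have hub : (N ℓ : ℝ) ≤ K * ε ^ (-2:ℝ) * t ^ (-(δ * ((L:ℝ) - (ℓ:ℝ)))) + 1 :=
        (Nat.ceil_lt_add_one (hNval_pos ℓ).le).le
      have htγd : (0:ℝ) < t ^ (γ * ((L:ℝ) - (ℓ:ℝ))) := Real.rpow_pos_of_pos ht0 _
      have heq : (K * ε ^ (-2:ℝ) * t ^ (-(δ * ((L:ℝ) - (ℓ:ℝ)))) + 1) *
            (c₃ * t ^ (γ * ((L:ℝ) - (ℓ:ℝ))))
          = c₃ * K * ε ^ (-2:ℝ) * r2 ^ (L - ℓ) + c₃ * (t ^ γ) ^ (L - ℓ) := by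
        have hr2m : r2 ^ (L - ℓ) = t ^ (-(δ - γ) * ((L:ℝ) - (ℓ:ℝ))) := by
          rw [hr2_def, ← Real.rpow_natCast (t ^ (-(δ - γ))) (L - ℓ),
            ← Real.rpow_mul ht0.le, hd]
        have htγm : (t ^ γ) ^ (L - ℓ) = t ^ (γ * ((L:ℝ) - (ℓ:ℝ))) := by
          rw [← Real.rpow_natCast (t ^ γ) (L - ℓ), ← Real.rpow_mul ht0.le, hd]
        have hcomb2 : t ^ (-(δ * ((L:ℝ) - (ℓ:ℝ)))) * t ^ (γ * ((L:ℝ) - (ℓ:ℝ)))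
            = t ^ (-(δ - γ) * ((L:ℝ) - (ℓ:ℝ))) := by
          rw [← Real.rpow_add ht0]; congr 1; ring
        rw [hr2m, htγm,
          show (K * ε ^ (-2:ℝ) * t ^ (-(δ * ((L:ℝ) - (ℓ:ℝ)))) + 1) *
              (c₃ * t ^ (γ * ((L:ℝ) - (ℓ:ℝ))))
            = c₃ * K * ε ^ (-2:ℝ) *
                (t ^ (-(δ * ((L:ℝ) - (ℓ:ℝ)))) * t ^ (γ * ((L:ℝ) - (ℓ:ℝ))))
              + c₃ * t ^ (γ * ((L:ℝ) - (ℓ:ℝ))) from by ring,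
          hcomb2]
      calc (N ℓ : ℝ) * (c₃ * t ^ (γ * ((L:ℝ) - (ℓ:ℝ))))
          ≤ (K * ε ^ (-2:ℝ) * t ^ (-(δ * ((L:ℝ) - (ℓ:ℝ)))) + 1) *
              (c₃ * t ^ (γ * ((L:ℝ) - (ℓ:ℝ)))) :=
            mul_le_mul_of_nonneg_right hub (mul_nonneg hc₃.le htγd.le)
        _ = _ := heq
    have hE0 : (0:ℝ) < ε ^ (-2:ℝ) := Real.rpow_pos_of_pos hε _
    have hgsum2 : ∑ ℓ ∈ Finset.range (L + 1), r2 ^ (L - ℓ) ≤ 1 / (1 - r2) := by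
      rw [show ∑ ℓ ∈ Finset.range (L + 1), r2 ^ (L - ℓ)
          = ∑ j ∈ Finset.range (L + 1), r2 ^ j from
          Finset.sum_range_reflect (fun j => r2 ^ j) (L + 1)]
      exact mlmc_geom_sum_le_of_lt_one hr2_pos.le hr2_lt (L + 1)
    have hgsum3 : ∑ ℓ ∈ Finset.range (L + 1), (t ^ γ) ^ (L - ℓ)
        ≤ (t ^ γ) ^ (L + 1) / (t ^ γ - 1) := by
      rw [show ∑ ℓ ∈ Finset.range (L + 1), (t ^ γ) ^ (L - ℓ)
          = ∑ j ∈ Finset.range (L + 1), (t ^ γ) ^ j from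
          Finset.sum_range_reflect (fun j => (t ^ γ) ^ j) (L + 1)]
      exact mlmc_geom_sum_le_of_one_lt htγ (L + 1)
    have hpow : (t ^ γ) ^ (L + 1) ≤ t ^ (2 * α + γ) * (2 * c₁ ^ 2) * ε ^ (-2:ℝ) := by
      have h1 : (t ^ γ) ^ (L + 1) = t ^ (γ * (L:ℝ)) * t ^ γ := by
        rw [pow_succ, ← Real.rpow_natCast (t ^ γ) L, ← Real.rpow_mul ht0.le]
      rw [h1, hεinv]
      have h2 : t ^ (γ * (L:ℝ)) * t ^ γ
          ≤ (t ^ (2 * α) * (2 * c₁ ^ 2 / ε ^ 2)) * t ^ γ :=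
        mul_le_mul_of_nonneg_right hkey2 (Real.rpow_pos_of_pos ht0 γ).le
      calc t ^ (γ * (L:ℝ)) * t ^ γ ≤ (t ^ (2 * α) * (2 * c₁ ^ 2 / ε ^ 2)) * t ^ γ := h2
        _ = t ^ (2 * α + γ) * (2 * c₁ ^ 2) * (ε ^ 2)⁻¹ := by
            rw [Real.rpow_add ht0]; field_simp
    calc ∑ ℓ ∈ Finset.range (L + 1), (N ℓ : ℝ) * (c₃ * t ^ (γ * ((L:ℝ) - (ℓ:ℝ))))
        ≤ ∑ ℓ ∈ Finset.range (L + 1),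
            (c₃ * K * ε ^ (-2:ℝ) * r2 ^ (L - ℓ) + c₃ * (t ^ γ) ^ (L - ℓ)) :=
          Finset.sum_le_sum hstep
      _ = c₃ * K * ε ^ (-2:ℝ) * (∑ ℓ ∈ Finset.range (L + 1), r2 ^ (L - ℓ))
            + c₃ * (∑ ℓ ∈ Finset.range (L + 1), (t ^ γ) ^ (L - ℓ)) := by
          rw [Finset.sum_add_distrib, Finset.mul_sum, Finset.mul_sum]
      _ ≤ c₃ * K * ε ^ (-2:ℝ) * (1 / (1 - r2))
            + c₃ * ((t ^ γ) ^ (L + 1) / (t ^ γ - 1)) :=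
          add_le_add
            (mul_le_mul_of_nonneg_left hgsum2
              (mul_nonneg (mul_nonneg hc₃.le hK_pos.le) hE0.le))
            (mul_le_mul_of_nonneg_left hgsum3 hc₃.le)
      _ ≤ c₃ * K * ε ^ (-2:ℝ) * (1 / (1 - r2))
            + c₃ * ((t ^ (2 * α + γ) * (2 * c₁ ^ 2) * ε ^ (-2:ℝ)) / (t ^ γ - 1)) :=
          add_le_add_right
            (mul_le_mul_of_nonneg_left
              ((div_le_div_iff_of_pos_right (show (0:ℝ) < t ^ γ - 1 by linarith)).mpr hpow)
              hc₃.le) _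
      _ = c₄ * ε ^ (-2:ℝ) := by
          rw [hc4_def]
          have h1 : (1:ℝ) - r2 ≠ 0 := by linarith
          have h2 : t ^ γ - 1 ≠ 0 := by linarith
          field_simp
end

section
/- (MLMC complexity, case β < γ.) Let α, β, γ, c₁, c₂, c₃ > 0 with β < γ and α ≥ β/2 (i.e., α ≥ ½ min(β, γ)), and let s ≥ 2 be an integer. Then there exist constants ε₀ > 0 and c₄ > 0 such that for every ε ∈ (0, ε₀) there exist L ∈ ℕ and positive integers N_0, ..., N_L satisfying both the mean-square-error bound c₁² s^{-2αL} + Σ_{ℓ=0}^{L} c₂ s^{-β(L−ℓ)} / N_ℓ ≤ ε² and the total cost bound Σ_{ℓ=0}^{L} N_ℓ · c₃ s^{γ(L−ℓ)} ≤ c₄ ε^{-2-(γ−β)/α}. -/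
open Real Finset

lemma geom_sum_le_one_div (r : ℝ) (h0 : 0 ≤ r) (h1 : r < 1) (n : ℕ) :
    ∑ ℓ ∈ Finset.range n, r ^ ℓ ≤ 1 / (1 - r) := by
  have h2 : 0 < 1 - r := by linarith
  rw [geom_sum_eq h1.ne]
  have e : (r ^ n - 1) / (r - 1) = (1 - r ^ n) / (1 - r) := by
    rw [← neg_div_neg_eq]; ring_nf
  rw [e]
  have := pow_nonneg h0 n
  gcongr
  linarith

set_option maxHeartbeats 1000000 in
/-- MLMC complexity theorem, arithmetic core, case `β < γ`: for a geometric mesh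
hierarchy `M_ℓ = s^(L-ℓ)`, for all sufficiently small `ε` one can choose a number
of levels `L` and positive sample counts `N_ℓ` so that
`c₁² s^{-2αL} + ∑_ℓ c₂ s^{-β(L-ℓ)}/N_ℓ ≤ ε²` holds with total cost
`∑_ℓ N_ℓ c₃ s^{γ(L-ℓ)} ≤ c₄ ε^{-2-(γ-β)/α}`. -/
theorem mlmc_complexity_beta_lt_gamma
    (α β γ c₁ c₂ c₃ : ℝ)
    (hα : 0 < α) (hβ : 0 < β) (hγ : 0 < γ)
    (hc₁ : 0 < c₁) (hc₂ : 0 < c₂) (hc₃ : 0 < c₃)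
    (hβγ : β < γ) (hαβ : β / 2 ≤ α)
    (s : ℕ) (hs : 2 ≤ s) :
    ∃ ε₀ c₄ : ℝ, 0 < ε₀ ∧ 0 < c₄ ∧
      ∀ ε : ℝ, 0 < ε → ε < ε₀ →
        ∃ (L : ℕ) (N : ℕ → ℕ), (∀ ℓ ≤ L, 0 < N ℓ) ∧
          c₁ ^ 2 * (s : ℝ) ^ (-(2 * α * (L : ℝ))) +
              (∑ ℓ ∈ Finset.range (L + 1),
                c₂ * (s : ℝ) ^ (-(β * ((L : ℝ) - (ℓ : ℝ)))) / (N ℓ : ℝ)) ≤ ε ^ 2 ∧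
          (∑ ℓ ∈ Finset.range (L + 1),
              (N ℓ : ℝ) * (c₃ * (s : ℝ) ^ (γ * ((L : ℝ) - (ℓ : ℝ)))))
            ≤ c₄ * ε ^ (-2 - (γ - β) / α) := by
  have hs1 : (1:ℝ) < (s:ℝ) := by exact_mod_cast (by omega : 1 < s)
  have hs0 : (0:ℝ) < (s:ℝ) := by linarith
  have hlogs : 0 < Real.log s := Real.log_pos hs1
  set b : ℝ := (γ - β) / 2 with hb_def
  have hb : 0 < b := by simp only [hb_def]; linarith
  set r : ℝ := (s:ℝ) ^ (-b) with hr_def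
  have hr0 : 0 < r := Real.rpow_pos_of_pos hs0 _
  have hr1 : r < 1 := Real.rpow_lt_one_of_one_lt_of_neg hs1 (by linarith)
  set S : ℝ := 1 / (1 - r) with hS_def
  have hS : 0 < S := by apply div_pos one_pos; linarith
  set rg : ℝ := (s:ℝ) ^ (-γ) with hrg_def
  have hrg0 : 0 < rg := Real.rpow_pos_of_pos hs0 _
  have hrg1 : rg < 1 := Real.rpow_lt_one_of_one_lt_of_neg hs1 (by linarith)
  set Sg : ℝ := 1 / (1 - rg) with hSg_def
  have hSg : 0 < Sg := by apply div_pos one_pos; linarith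
  set K : ℝ := 2 * c₂ * S with hK_def
  have hK : 0 < K := by positivity
  refine ⟨min 1 c₁, K * c₃ * S * (s:ℝ) ^ (γ - β) * (2 * c₁ ^ 2) ^ ((γ - β) / (2 * α))
      + c₃ * Sg * (s:ℝ) ^ γ * (2 * c₁ ^ 2) ^ (γ / (2 * α)), by positivity, by positivity,
    ?_⟩
  intro ε hε hε'
  have hε1 : ε < 1 := lt_of_lt_of_le hε' (min_le_left _ _)
  have hεc : ε < c₁ := lt_of_lt_of_le hε' (min_le_right _ _)
  set D : ℝ := 2 * c₁ ^ 2 / ε ^ 2 with hD_def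
  have hD1 : 1 < D := by
    rw [hD_def, lt_div_iff₀ (by positivity)]
    nlinarith
  have hD0 : 0 < D := by linarith
  have hlogD : 0 < Real.log D := Real.log_pos hD1
  set x : ℝ := Real.log D / (2 * α * Real.log s) with hx_def
  have hx : 0 < x := by apply div_pos hlogD; positivity
  set L : ℕ := ⌈x⌉₊ with hL_def
  have hL1 : x ≤ (L:ℝ) := Nat.le_ceil x
  have hL2 : (L:ℝ) ≤ x + 1 := (Nat.ceil_lt_add_one hx.le).le
  set A : ℕ → ℝ := fun ℓ =>
    K * ε⁻¹ ^ 2 * (s:ℝ) ^ (b * (L:ℝ)) * (s:ℝ) ^ (-((β + γ) / 2 * ((L:ℝ) - (ℓ:ℝ)))) with hA_def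
  have hApos : ∀ ℓ, 0 < A ℓ := fun ℓ => by
    have := Real.rpow_pos_of_pos hs0 (b * (L:ℝ))
    have := Real.rpow_pos_of_pos hs0 (-((β + γ) / 2 * ((L:ℝ) - (ℓ:ℝ))))
    positivity
  refine ⟨L, fun ℓ => ⌈A ℓ⌉₊, fun ℓ _ => Nat.ceil_pos.mpr (hApos ℓ), ?_, ?_⟩
  · -- MSE bound
    have hxD : x * (2 * α * Real.log s) = Real.log D := by
      rw [hx_def]; field_simp
    have h1 : c₁ ^ 2 * (s:ℝ) ^ (-(2 * α * (L:ℝ))) ≤ ε ^ 2 / 2 := by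
      have hexp : (s:ℝ) ^ (-(2 * α * (L:ℝ))) ≤ D⁻¹ := by
        rw [Real.rpow_def_of_pos hs0, ← Real.exp_log (inv_pos.mpr hD0), Real.log_inv]
        apply Real.exp_le_exp.mpr
        have h : Real.log D ≤ (L:ℝ) * (2 * α * Real.log s) := by
          rw [← hxD]; exact mul_le_mul_of_nonneg_right hL1 (by positivity)
        nlinarith
      have h2 : c₁ ^ 2 * D⁻¹ = ε ^ 2 / 2 := by
        rw [hD_def]; field_simp
      calc c₁ ^ 2 * (s:ℝ) ^ (-(2 * α * (L:ℝ))) ≤ c₁ ^ 2 * D⁻¹ := by gcongr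
        _ = ε ^ 2 / 2 := h2
    have hpt : ∀ ℓ ∈ Finset.range (L + 1),
        c₂ * (s:ℝ) ^ (-(β * ((L:ℝ) - (ℓ:ℝ)))) / ((⌈A ℓ⌉₊ : ℝ)) ≤ (ε ^ 2 / (2 * S)) * r ^ ℓ := by
      intro ℓ _
      have hA := hApos ℓ
      have step1 : c₂ * (s:ℝ) ^ (-(β * ((L:ℝ) - (ℓ:ℝ)))) / ((⌈A ℓ⌉₊ : ℝ))
          ≤ c₂ * (s:ℝ) ^ (-(β * ((L:ℝ) - (ℓ:ℝ)))) / A ℓ := by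
        have hup : A ℓ ≤ (⌈A ℓ⌉₊ : ℝ) := Nat.le_ceil _
        have hnum : 0 ≤ c₂ * (s:ℝ) ^ (-(β * ((L:ℝ) - (ℓ:ℝ)))) := by positivity
        gcongr
      have hq : A ℓ = K * ε⁻¹ ^ 2 * (s:ℝ) ^ (b * (L:ℝ) + -((β + γ) / 2 * ((L:ℝ) - (ℓ:ℝ)))) := by
        rw [hA_def]; rw [Real.rpow_add hs0]; ring
      have hrl : (s:ℝ) ^ (-(β * ((L:ℝ) - (ℓ:ℝ))) - (b * (L:ℝ) + -((β + γ) / 2 * ((L:ℝ) - (ℓ:ℝ)))))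
          = r ^ ℓ := by
        have : -(β * ((L:ℝ) - (ℓ:ℝ))) - (b * (L:ℝ) + -((β + γ) / 2 * ((L:ℝ) - (ℓ:ℝ))))
            = (-b) * (ℓ:ℝ) := by rw [hb_def]; ring
        rw [this, hr_def, ← Real.rpow_natCast ((s:ℝ) ^ (-b)) ℓ, ← Real.rpow_mul hs0.le]
      have hsq : (0:ℝ) < (s:ℝ) ^ (b * (L:ℝ) + -((β + γ) / 2 * ((L:ℝ) - (ℓ:ℝ)))) :=
        Real.rpow_pos_of_pos hs0 _
      have step2 : c₂ * (s:ℝ) ^ (-(β * ((L:ℝ) - (ℓ:ℝ)))) / A ℓ = (ε ^ 2 / (2 * S)) * r ^ ℓ := by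
        rw [hq, ← hrl, Real.rpow_sub hs0, hK_def]
        field_simp
      rw [step2] at step1; exact step1
    have hsum : (∑ ℓ ∈ Finset.range (L + 1),
        c₂ * (s:ℝ) ^ (-(β * ((L:ℝ) - (ℓ:ℝ)))) / ((⌈A ℓ⌉₊ : ℝ))) ≤ ε ^ 2 / 2 := by
      calc (∑ ℓ ∈ Finset.range (L + 1), c₂ * (s:ℝ) ^ (-(β * ((L:ℝ) - (ℓ:ℝ)))) / ((⌈A ℓ⌉₊ : ℝ)))
          ≤ ∑ ℓ ∈ Finset.range (L + 1), (ε ^ 2 / (2 * S)) * r ^ ℓ := Finset.sum_le_sum hpt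
        _ = (ε ^ 2 / (2 * S)) * ∑ ℓ ∈ Finset.range (L + 1), r ^ ℓ := by rw [Finset.mul_sum]
        _ ≤ (ε ^ 2 / (2 * S)) * S := by
            have := geom_sum_le_one_div r hr0.le hr1 (L + 1)
            rw [← hS_def] at this
            gcongr
        _ = ε ^ 2 / 2 := by field_simp
    linarith
  · -- cost bound
    set E : ℝ := ε ^ (-2 - (γ - β) / α) with hE_def
    have hE : 0 < E := Real.rpow_pos_of_pos hε _
    set C1 : ℝ := K * ε⁻¹ ^ 2 * c₃ * ((s:ℝ) ^ (b * (L:ℝ))) ^ 2 with hC1_def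
    set C2 : ℝ := c₃ * (s:ℝ) ^ (γ * (L:ℝ)) with hC2_def
    have hbLpos : (0:ℝ) < (s:ℝ) ^ (b * (L:ℝ)) := Real.rpow_pos_of_pos hs0 _
    have hgLpos : (0:ℝ) < (s:ℝ) ^ (γ * (L:ℝ)) := Real.rpow_pos_of_pos hs0 _
    have hC1pos : 0 < C1 := by rw [hC1_def]; positivity
    have hC2pos : 0 < C2 := by rw [hC2_def]; positivity
    have hpt : ∀ ℓ ∈ Finset.range (L + 1),
        ((⌈A ℓ⌉₊ : ℝ)) * (c₃ * (s:ℝ) ^ (γ * ((L:ℝ) - (ℓ:ℝ))))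
          ≤ C1 * r ^ ℓ + C2 * rg ^ ℓ := by
      intro ℓ _
      have hA := hApos ℓ
      have hceil : ((⌈A ℓ⌉₊ : ℝ)) ≤ A ℓ + 1 := (Nat.ceil_lt_add_one hA.le).le
      have hcpos : (0:ℝ) < (s:ℝ) ^ (γ * ((L:ℝ) - (ℓ:ℝ))) := Real.rpow_pos_of_pos hs0 _
      have key : (s:ℝ) ^ (-((β + γ) / 2 * ((L:ℝ) - (ℓ:ℝ)))) * (s:ℝ) ^ (γ * ((L:ℝ) - (ℓ:ℝ)))
          = (s:ℝ) ^ (b * (L:ℝ)) * r ^ ℓ := by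
        rw [hr_def, ← Real.rpow_natCast ((s:ℝ) ^ (-b)) ℓ, ← Real.rpow_mul hs0.le,
          ← Real.rpow_add hs0, ← Real.rpow_add hs0]
        congr 1; rw [hb_def]; ring
      have keyg : (s:ℝ) ^ (γ * ((L:ℝ) - (ℓ:ℝ))) = (s:ℝ) ^ (γ * (L:ℝ)) * rg ^ ℓ := by
        rw [hrg_def, ← Real.rpow_natCast ((s:ℝ) ^ (-γ)) ℓ, ← Real.rpow_mul hs0.le,
          ← Real.rpow_add hs0]
        congr 1; ring
      have e1 : A ℓ * (c₃ * (s:ℝ) ^ (γ * ((L:ℝ) - (ℓ:ℝ)))) = C1 * r ^ ℓ := by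
        rw [hC1_def]
        simp only [hA_def]
        linear_combination (K * ε⁻¹ ^ 2 * (s:ℝ) ^ (b * (L:ℝ)) * c₃) * key
      calc ((⌈A ℓ⌉₊ : ℝ)) * (c₃ * (s:ℝ) ^ (γ * ((L:ℝ) - (ℓ:ℝ))))
          ≤ (A ℓ + 1) * (c₃ * (s:ℝ) ^ (γ * ((L:ℝ) - (ℓ:ℝ)))) := by
            have h0 : (0:ℝ) ≤ c₃ * (s:ℝ) ^ (γ * ((L:ℝ) - (ℓ:ℝ))) := by positivity
            exact mul_le_mul_of_nonneg_right hceil h0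
        _ = A ℓ * (c₃ * (s:ℝ) ^ (γ * ((L:ℝ) - (ℓ:ℝ))))
            + c₃ * (s:ℝ) ^ (γ * ((L:ℝ) - (ℓ:ℝ))) := by ring
        _ = C1 * r ^ ℓ + C2 * rg ^ ℓ := by rw [e1, keyg, hC2_def]; ring
    have hsum : (∑ ℓ ∈ Finset.range (L + 1),
          ((⌈A ℓ⌉₊ : ℝ)) * (c₃ * (s:ℝ) ^ (γ * ((L:ℝ) - (ℓ:ℝ)))))
        ≤ C1 * S + C2 * Sg := by
      calc (∑ ℓ ∈ Finset.range (L + 1),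
            ((⌈A ℓ⌉₊ : ℝ)) * (c₃ * (s:ℝ) ^ (γ * ((L:ℝ) - (ℓ:ℝ)))))
          ≤ ∑ ℓ ∈ Finset.range (L + 1), (C1 * r ^ ℓ + C2 * rg ^ ℓ) := Finset.sum_le_sum hpt
        _ = C1 * (∑ ℓ ∈ Finset.range (L + 1), r ^ ℓ)
            + C2 * (∑ ℓ ∈ Finset.range (L + 1), rg ^ ℓ) := by
            rw [Finset.sum_add_distrib, Finset.mul_sum, Finset.mul_sum]
        _ ≤ C1 * S + C2 * Sg := by
            have g1 := geom_sum_le_one_div r hr0.le hr1 (L + 1)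
            have g2 := geom_sum_le_one_div rg hrg0.le hrg1 (L + 1)
            rw [← hS_def] at g1
            rw [← hSg_def] at g2
            gcongr
    -- bounds on the level-L powers
    have hDx : ∀ t : ℝ, 0 < t → (s:ℝ) ^ (t * x) = D ^ (t / (2 * α)) := by
      intro t ht
      rw [Real.rpow_def_of_pos hs0, Real.rpow_def_of_pos hD0]
      congr 1
      rw [hx_def]
      field_simp
    have hDsplit : ∀ t : ℝ, 0 < t →
        D ^ (t / (2 * α)) = (2 * c₁ ^ 2) ^ (t / (2 * α)) * ε ^ (-(t / α)) := by
      intro t ht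
      rw [hD_def, Real.div_rpow (by positivity) (by positivity),
        ← Real.rpow_natCast ε 2, ← Real.rpow_mul hε.le,
        div_eq_mul_inv, ← Real.rpow_neg hε.le]
      congr 1
      push_cast
      field_simp
    have hpow : ∀ t : ℝ, 0 < t → (s:ℝ) ^ (t * (L:ℝ))
        ≤ (s:ℝ) ^ t * ((2 * c₁ ^ 2) ^ (t / (2 * α)) * ε ^ (-(t / α))) := by
      intro t ht
      calc (s:ℝ) ^ (t * (L:ℝ)) ≤ (s:ℝ) ^ (t * (x + 1)) := by
            apply Real.rpow_le_rpow_of_exponent_le hs1.le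
            nlinarith
        _ = (s:ℝ) ^ t * (s:ℝ) ^ (t * x) := by
            rw [← Real.rpow_add hs0]; congr 1; ring
        _ = (s:ℝ) ^ t * ((2 * c₁ ^ 2) ^ (t / (2 * α)) * ε ^ (-(t / α))) := by
            rw [hDx t ht, hDsplit t ht]
    have hsq : ((s:ℝ) ^ (b * (L:ℝ))) ^ 2 = (s:ℝ) ^ ((γ - β) * (L:ℝ)) := by
      rw [← Real.rpow_natCast ((s:ℝ) ^ (b * (L:ℝ))) 2, ← Real.rpow_mul hs0.le]
      congr 1
      rw [hb_def]
      push_cast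
      ring
    have hinv2 : ε⁻¹ ^ 2 = ε ^ (-(2:ℝ)) := by
      rw [inv_pow, ← Real.rpow_natCast ε 2, ← Real.rpow_neg hε.le]
      norm_num
    have hmul1 : ε ^ (-(2:ℝ)) * ε ^ (-((γ - β) / α)) = E := by
      rw [hE_def, ← Real.rpow_add hε]
      ring_nf
    have hE2 : ε ^ (-(γ / α)) ≤ E := by
      rw [hE_def]
      apply Real.rpow_le_rpow_of_exponent_ge hε hε1.le
      have hba : β / α ≤ 2 := by rw [div_le_iff₀ hα]; linarith
      have hh : -(γ / α) - (-2 - (γ - β) / α) = 2 - β / α := by field_simp; ring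
      linarith
    have hC1 : C1 * S ≤ (K * c₃ * S * (s:ℝ) ^ (γ - β) * (2 * c₁ ^ 2) ^ ((γ - β) / (2 * α))) * E := by
      have hb2 : ((s:ℝ) ^ (b * (L:ℝ))) ^ 2
          ≤ (s:ℝ) ^ (γ - β) * ((2 * c₁ ^ 2) ^ ((γ - β) / (2 * α)) * ε ^ (-((γ - β) / α))) := by
        rw [hsq]
        exact hpow (γ - β) (by linarith)
      calc C1 * S
          ≤ (K * ε⁻¹ ^ 2 * c₃ *
              ((s:ℝ) ^ (γ - β) * ((2 * c₁ ^ 2) ^ ((γ - β) / (2 * α)) * ε ^ (-((γ - β) / α))))) * S := by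
            rw [hC1_def]
            have h0 : (0:ℝ) ≤ K * ε⁻¹ ^ 2 * c₃ := by positivity
            exact mul_le_mul_of_nonneg_right (mul_le_mul_of_nonneg_left hb2 h0) hS.le
        _ = (K * c₃ * S * (s:ℝ) ^ (γ - β) * (2 * c₁ ^ 2) ^ ((γ - β) / (2 * α)))
            * (ε ^ (-(2:ℝ)) * ε ^ (-((γ - β) / α))) := by rw [hinv2]; ring
        _ = _ := by rw [hmul1]
    have hC2 : C2 * Sg ≤ (c₃ * Sg * (s:ℝ) ^ γ * (2 * c₁ ^ 2) ^ (γ / (2 * α))) * E := by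
      have hg2 := hpow γ hγ
      calc C2 * Sg
          ≤ (c₃ * ((s:ℝ) ^ γ * ((2 * c₁ ^ 2) ^ (γ / (2 * α)) * ε ^ (-(γ / α))))) * Sg := by
            rw [hC2_def]
            have h0 : (0:ℝ) ≤ c₃ := hc₃.le
            exact mul_le_mul_of_nonneg_right (mul_le_mul_of_nonneg_left hg2 h0) hSg.le
        _ = (c₃ * Sg * (s:ℝ) ^ γ * (2 * c₁ ^ 2) ^ (γ / (2 * α))) * ε ^ (-(γ / α)) := by ring
        _ ≤ _ := by
            have h0 : (0:ℝ) ≤ c₃ * Sg * (s:ℝ) ^ γ * (2 * c₁ ^ 2) ^ (γ / (2 * α)) := by positivity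
            exact mul_le_mul_of_nonneg_left hE2 h0
    calc (∑ ℓ ∈ Finset.range (L + 1),
          ((⌈A ℓ⌉₊ : ℝ)) * (c₃ * (s:ℝ) ^ (γ * ((L:ℝ) - (ℓ:ℝ)))))
        ≤ C1 * S + C2 * Sg := hsum
      _ ≤ (K * c₃ * S * (s:ℝ) ^ (γ - β) * (2 * c₁ ^ 2) ^ ((γ - β) / (2 * α))) * E
          + (c₃ * Sg * (s:ℝ) ^ γ * (2 * c₁ ^ 2) ^ (γ / (2 * α))) * E := by linarith
      _ = (K * c₃ * S * (s:ℝ) ^ (γ - β) * (2 * c₁ ^ 2) ^ ((γ - β) / (2 * α))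
          + c₃ * Sg * (s:ℝ) ^ γ * (2 * c₁ ^ 2) ^ (γ / (2 * α))) * E := by ring
end

section
/- Let R be a commutative ring, let D (fine global dofs), D^c (coarse global dofs) be finite index types, and let 𝒯 be a finite index set of agglomerated elements. For each T ∈ 𝒯 let d_T and d_T^c be finite index types (local fine and coarse dofs of T), and let R_T : Matrix d_T D R (fine restriction), R_T^c : Matrix d_T^c D^c R (coarse restriction), A_T : Matrix d_T d_T R (local element matrix), and P_T : Matrix d_T d_T^c R (local interpolation) be given. Let P : Matrix D D^c R be a global interpolation matrix. Assume (i) the global matrix assembles from the local matrices, A = Σ_{T∈𝒯} R_Tᵀ ⬝ A_T ⬝ R_T, and (ii) the conformity condition R_T ⬝ P = P_T ⬝ R_T^c holds for every T ∈ 𝒯. Then the global coarse matrix P ᵀ ⬝ A ⬝ P equals the matrix assembled from the local coarse element matrices A_T^c = P_Tᵀ ⬝ A_T ⬝ P_T, namely Pᵀ ⬝ A ⬝ P = Σ_{T∈𝒯} (R_T^c)ᵀ ⬝ (P_Tᵀ ⬝ A_T ⬝ P_T) ⬝ R_T^c. -/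
open Matrix Finset

/-- AMGe conformity: if the global matrix `A` assembles from local element
matrices `A_T` via restrictions `R_T`, and the global interpolation `P` agrees
with the local interpolations `P_T` after restriction
(`R_T ⬝ P = P_T ⬝ R_T^c`), then the global coarse matrix `Pᵀ ⬝ A ⬝ P` equals
the matrix assembled from the local coarse element matrices
`A_T^c = P_Tᵀ ⬝ A_T ⬝ P_T`. -/
theorem amge_coarse_assembly
    {R : Type*} [CommRing R]
    {D Dc : Type*} [Fintype D] [Fintype Dc] [DecidableEq D] [DecidableEq Dc]
    {𝒯 : Type*} [Fintype 𝒯]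
    (dT dTc : 𝒯 → Type*) [∀ T, Fintype (dT T)] [∀ T, Fintype (dTc T)]
    [∀ T, DecidableEq (dT T)] [∀ T, DecidableEq (dTc T)]
    (Rt : ∀ T, Matrix (dT T) D R)
    (Rtc : ∀ T, Matrix (dTc T) Dc R)
    (At : ∀ T, Matrix (dT T) (dT T) R)
    (Pt : ∀ T, Matrix (dT T) (dTc T) R)
    (P : Matrix D Dc R) (A : Matrix D D R)
    (hA : A = ∑ T, (Rt T)ᵀ * At T * Rt T)
    (hconf : ∀ T, Rt T * P = Pt T * Rtc T) :
    Pᵀ * A * P = ∑ T, (Rtc T)ᵀ * ((Pt T)ᵀ * At T * Pt T) * Rtc T := by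
  subst hA
  rw [Matrix.mul_sum, Matrix.sum_mul]
  refine Finset.sum_congr rfl fun T _ => ?_
  have h := hconf T
  have h' : Pᵀ * (Rt T)ᵀ = (Rtc T)ᵀ * (Pt T)ᵀ := by
    rw [← transpose_mul, h, transpose_mul]
  calc Pᵀ * ((Rt T)ᵀ * At T * Rt T) * P
      = (Pᵀ * (Rt T)ᵀ) * At T * (Rt T * P) := by
        simp only [Matrix.mul_assoc]
    _ = (Rtc T)ᵀ * ((Pt T)ᵀ * At T * Pt T) * Rtc T := by
        rw [h', h]; simp only [Matrix.mul_assoc]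
end
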